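/- There is a universal constant C such that for all f ∈ L²(ℝ,ℂ), g ∈ L²(ℝ,ℂ) and λ ∈ ℂ with Im λ² > 0, the operator norm of T_f(λ)T_g(λ) on L²(ℝ,ℂ²) satisfies ‖T_f(λ)T_g(λ)‖² ≤ C (|λ|⁴/(Im λ²)²) ∫_{ℝ²} e^{−2 Im(λ²)|x−y|} |f(x)|² |g(y)|² dx dy. -/

import Mathlib

open MeasureTheory Complex

/-- First component of `T_u(λ) f` for `T_u(λ) = iλ(𝓛₀ − λ²)⁻¹U_u`, via the explicit
kernel of the free resolvent of `𝓛₀ = iσ₃∂ₓ`. -/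
noncomputable def Tcomp₁ (u : ℝ → ℂ) (lam : ℂ) (f₂ : ℝ → ℂ) (x : ℝ) : ℂ :=
  Complex.I * lam * ∫ y : ℝ,
    (if x < y then Complex.I * Complex.exp (-Complex.I * lam ^ 2 * ((x : ℂ) - y)) else 0) *
      u y * f₂ y

/-- Second component of `T_u(λ) f`. -/
noncomputable def Tcomp₂ (u : ℝ → ℂ) (lam : ℂ) (f₁ : ℝ → ℂ) (x : ℝ) : ℂ :=
  Complex.I * lam * ∫ y : ℝ,
    (if y < x then Complex.I * Complex.exp (Complex.I * lam ^ 2 * ((x : ℂ) - y)) else 0) *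
      (starRingEnd ℂ) (u y) * f₁ y

namespace TTaux

open Set Function
open scoped ENNReal NNReal

noncomputable def ker (a x y : ℝ) : ℝ≥0∞ :=
  if x < y then ENNReal.ofReal (Real.exp (-(a * (y - x)))) else 0

lemma ker_meas (a : ℝ) : Measurable (fun p : ℝ × ℝ => ker a p.1 p.2) := by
  unfold ker
  refine Measurable.ite (measurableSet_lt measurable_fst measurable_snd) ?_ measurable_const
  exact (Real.measurable_exp.comp
    ((measurable_snd.sub measurable_fst).const_mul a).neg).ennreal_ofReal

lemma ker_meas_left (a y : ℝ) : Measurable (fun x => ker a x y) :=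
  (ker_meas a).comp (measurable_id.prodMk measurable_const)

lemma ker_meas_right (a x : ℝ) : Measurable (fun y => ker a x y) :=
  (ker_meas a).comp (measurable_const.prodMk measurable_id)

lemma integrable_exp_Ioi (a c : ℝ) (ha : 0 < a) :
    IntegrableOn (fun y => Real.exp (-(a * (y - c)))) (Ioi c) := by
  have h := (exp_neg_integrableOn_Ioi c ha).const_mul (Real.exp (a * c))
  refine (IntegrableOn.congr_fun h (fun y _ => ?_) measurableSet_Ioi)
  rw [← Real.exp_add]; ring_nf

lemma integral_exp_Ioi (a c : ℝ) (ha : 0 < a) :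
    ∫ y in Ioi c, Real.exp (-(a * (y - c))) = a⁻¹ := by
  have hderiv : ∀ y ∈ Ioi c,
      HasDerivAt (fun y => -Real.exp (-(a * (y - c))) / a) (Real.exp (-(a * (y - c)))) y := by
    intro y _
    have h1 : HasDerivAt (fun y : ℝ => -(a * (y - c))) (-a) y := by
      have h0 := (((hasDerivAt_id y).sub_const c).const_mul a).neg
      simp only [mul_one] at h0
      exact h0
    have h2 := (h1.exp).neg.div_const a
    refine h2.congr_deriv ?_
    rw [mul_neg, neg_neg, mul_div_assoc, div_self ha.ne', mul_one]
  have h1 : Filter.Tendsto (fun y : ℝ => -(a * (y - c))) Filter.atTop Filter.atBot := by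
    refine Filter.tendsto_neg_atBot_iff.mpr ?_
    exact ((Filter.tendsto_atTop_add_const_right _ (-c) Filter.tendsto_id).const_mul_atTop ha).congr
      (fun y => by simp only [id_eq]; ring)
  have htend : Filter.Tendsto (fun y => -Real.exp (-(a * (y - c))) / a)
      Filter.atTop (nhds 0) := by
    have h2 := ((Real.tendsto_exp_atBot.comp h1).neg).div_const a
    simpa using h2
  have hcont : ContinuousWithinAt (fun y => -Real.exp (-(a * (y - c))) / a) (Ici c) c :=
    ((Real.continuous_exp.comp (by continuity)).neg.div_const a).continuousWithinAt
  have h := integral_Ioi_of_hasDerivAt_of_tendsto hcont hderiv (integrable_exp_Ioi a c ha) htend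
  rw [h]
  simp
  ring

lemma ker_row {a : ℝ} (ha : 0 < a) (x : ℝ) :
    ∫⁻ y, ker a x y = ENNReal.ofReal a⁻¹ := by
  have h1 : ∀ y, ker a x y
      = (Ioi x).indicator (fun y => ENNReal.ofReal (Real.exp (-(a * (y - x))))) y := by
    intro y; unfold ker
    by_cases h : x < y <;> simp [h, indicator, mem_Ioi]
  rw [lintegral_congr h1, lintegral_indicator measurableSet_Ioi,
    ← ofReal_integral_eq_lintegral_ofReal (integrable_exp_Ioi a x ha)
      (Filter.Eventually.of_forall fun y => (Real.exp_pos _).le),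
    integral_exp_Ioi a x ha]

lemma ker_col {a : ℝ} (ha : 0 < a) (y : ℝ) :
    ∫⁻ x, ker a x y = ENNReal.ofReal a⁻¹ := by
  have hmp := Measure.measurePreserving_sub_left (volume : Measure ℝ) (2 * y)
  have h := hmp.lintegral_comp (ker_meas_left a y)
  rw [← h]
  have h2 : ∀ t, ker a (2 * y - t) y = ker a y t := by
    intro t; unfold ker
    have : 2 * y - t < y ↔ y < t := by constructor <;> intro <;> linarith
    by_cases ht : y < t
    · simp only [this.mpr ht, ht, if_true]
      ring_nf
    · simp [this, ht]
  rw [lintegral_congr h2, ker_row ha]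

lemma ker_sq (a x y : ℝ) : ker a x y ^ 2 = ker (2 * a) x y := by
  unfold ker
  by_cases h : x < y
  · simp only [h, if_true]
    rw [sq, ← ENNReal.ofReal_mul (Real.exp_nonneg _), ← Real.exp_add]
    ring_nf
  · simp [h]

lemma ker_le (a : ℝ) (x y : ℝ) :
    ker a x y ≤ ENNReal.ofReal (Real.exp (-(a * |x - y|))) := by
  unfold ker
  by_cases h : x < y
  · simp only [h, if_true]
    rw [abs_of_neg (by linarith : x - y < 0)]
    ring_nf
    exact le_rfl
  · simp [h]

lemma lintegral_CS (f g : ℝ → ℝ≥0∞) (hf : AEMeasurable f (volume : Measure ℝ))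
    (hg : AEMeasurable g (volume : Measure ℝ)) :
    (∫⁻ z, f z * g z) ^ 2 ≤ (∫⁻ z, (f z) ^ 2) * ∫⁻ z, (g z) ^ 2 := by
  have hpq : Real.HolderConjugate 2 2 := Real.HolderConjugate.two_two
  have h := ENNReal.lintegral_mul_le_Lp_mul_Lq (volume : Measure ℝ) hpq hf hg
  have h2 := pow_le_pow_left' h 2
  refine h2.trans_eq ?_
  rw [mul_pow, ← ENNReal.rpow_natCast ((∫⁻ z, f z ^ (2:ℝ)) ^ (1/(2:ℝ))) 2,
    ← ENNReal.rpow_natCast ((∫⁻ z, g z ^ (2:ℝ)) ^ (1/(2:ℝ))) 2,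
    ← ENNReal.rpow_mul, ← ENNReal.rpow_mul]
  norm_num

lemma schur {k : ℝ → ℝ → ℝ≥0∞} (hk : Measurable (fun p : ℝ × ℝ => k p.1 p.2))
    {A : ℝ≥0∞} (hA : A ≠ ∞) (hrow : ∀ x, ∫⁻ y, k x y ≤ A) (hcol : ∀ y, ∫⁻ x, k x y ≤ A)
    {ψ : ℝ → ℝ≥0∞} (hψ : AEMeasurable ψ (volume : Measure ℝ)) :
    ∫⁻ x, (∫⁻ y, k x y * ψ y) ^ 2 ≤ A ^ 2 * ∫⁻ y, ψ y ^ 2 := by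
  have hky : ∀ x, Measurable (fun y => k x y) :=
    fun x => hk.comp (measurable_const.prodMk measurable_id)
  have step1 : ∀ x, (∫⁻ y, k x y * ψ y) ^ 2 ≤ A * ∫⁻ y, k x y * ψ y ^ 2 := by
    intro x
    have hsq : ∀ b : ℝ≥0∞, (b ^ ((1:ℝ)/2)) ^ 2 = b := by
      intro b
      rw [← ENNReal.rpow_natCast (b ^ ((1:ℝ)/2)) 2, ← ENNReal.rpow_mul]
      norm_num
    have hsplit : ∀ y, k x y * ψ y = (k x y) ^ ((1:ℝ)/2) * ((k x y) ^ ((1:ℝ)/2) * ψ y) := by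
      intro y
      rw [← mul_assoc, ← sq, hsq]
    have hcs := lintegral_CS (fun y => (k x y) ^ ((1:ℝ)/2))
      (fun y => (k x y) ^ ((1:ℝ)/2) * ψ y)
      ((hky x).pow_const _).aemeasurable
      (((hky x).pow_const _).aemeasurable.mul hψ)
    calc (∫⁻ y, k x y * ψ y) ^ 2
        = (∫⁻ y, (k x y) ^ ((1:ℝ)/2) * ((k x y) ^ ((1:ℝ)/2) * ψ y)) ^ 2 := by
          rw [lintegral_congr hsplit]
      _ ≤ (∫⁻ y, ((k x y) ^ ((1:ℝ)/2)) ^ 2) * ∫⁻ y, ((k x y) ^ ((1:ℝ)/2) * ψ y) ^ 2 := hcs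
      _ = (∫⁻ y, k x y) * ∫⁻ y, k x y * ψ y ^ 2 := by
          congr 1
          · exact lintegral_congr fun y => hsq _
          · exact lintegral_congr fun y => by rw [mul_pow, hsq]
      _ ≤ A * ∫⁻ y, k x y * ψ y ^ 2 := mul_le_mul_left (hrow x) _
  have hswapmeas : AEMeasurable (fun p : ℝ × ℝ => k p.1 p.2 * ψ p.2 ^ 2)
      ((volume : Measure ℝ).prod (volume : Measure ℝ)) := by
    refine hk.aemeasurable.mul ?_
    exact ((hψ.pow_const 2).comp_quasiMeasurePreserving
      Measure.quasiMeasurePreserving_snd)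
  calc ∫⁻ x, (∫⁻ y, k x y * ψ y) ^ 2
      ≤ ∫⁻ x, A * ∫⁻ y, k x y * ψ y ^ 2 := lintegral_mono step1
    _ = A * ∫⁻ x, ∫⁻ y, k x y * ψ y ^ 2 := lintegral_const_mul' _ _ hA
    _ = A * ∫⁻ y, ∫⁻ x, k x y * ψ y ^ 2 := by
        rw [lintegral_lintegral_swap hswapmeas]
    _ = A * ∫⁻ y, (∫⁻ x, k x y) * ψ y ^ 2 := by
        congr 1
        exact lintegral_congr fun y => lintegral_mul_const _ (hk.comp
          (measurable_id.prodMk measurable_const))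
    _ ≤ A * ∫⁻ y, A * ψ y ^ 2 := by
        refine mul_le_mul_right (lintegral_mono fun y => mul_le_mul_left (hcol y) _) _
    _ = A ^ 2 * ∫⁻ y, ψ y ^ 2 := by
        rw [lintegral_const_mul' _ _ hA, sq, mul_assoc]

lemma norm_kernel₁ (lam : ℂ) (x y : ℝ) :
    (‖Complex.exp (-Complex.I * lam ^ 2 * ((x : ℂ) - y))‖₊ : ℝ≥0∞)
      = ENNReal.ofReal (Real.exp (-((lam ^ 2).im * (y - x)))) := by
  rw [← enorm_eq_nnnorm, ← ofReal_norm, Complex.norm_exp]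
  congr 2
  have h1 : ((x : ℂ) - y) = ((x - y : ℝ) : ℂ) := by push_cast; ring
  rw [h1, show (-Complex.I * lam ^ 2 * ((x - y : ℝ) : ℂ))
      = (((x - y : ℝ)) : ℂ) * (-(Complex.I * lam ^ 2)) by ring]
  simp [Complex.mul_re, Complex.mul_im, Complex.I_re, Complex.I_im]
  ring

lemma norm_kernel₂ (lam : ℂ) (x y : ℝ) :
    (‖Complex.exp (Complex.I * lam ^ 2 * ((x : ℂ) - y))‖₊ : ℝ≥0∞)
      = ENNReal.ofReal (Real.exp (-((lam ^ 2).im * (x - y)))) := by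
  rw [← enorm_eq_nnnorm, ← ofReal_norm, Complex.norm_exp]
  congr 2
  have h1 : ((x : ℂ) - y) = ((x - y : ℝ) : ℂ) := by push_cast; ring
  rw [h1, show (Complex.I * lam ^ 2 * ((x - y : ℝ) : ℂ))
      = (((x - y : ℝ)) : ℂ) * (Complex.I * lam ^ 2) by ring]
  simp [Complex.mul_re, Complex.mul_im, Complex.I_re, Complex.I_im]
  ring

lemma enorm_Tcomp₁_le (u F : ℝ → ℂ) (lam : ℂ) (x : ℝ) :
    (‖Tcomp₁ u lam F x‖₊ : ℝ≥0∞)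
      ≤ (‖lam‖₊ : ℝ≥0∞) * ∫⁻ y, ker ((lam ^ 2).im) x y * ((‖u y‖₊ : ℝ≥0∞) * ‖F y‖₊) := by
  have hnorm : ∀ y : ℝ,
      (‖(if x < y then Complex.I * Complex.exp (-Complex.I * lam ^ 2 * ((x : ℂ) - y)) else 0)
        * u y * F y‖₊ : ℝ≥0∞)
      = ker ((lam ^ 2).im) x y * ((‖u y‖₊ : ℝ≥0∞) * ‖F y‖₊) := by
    intro y
    by_cases h : x < y
    · simp only [h, if_true, ker, nnnorm_mul, nnnorm_I, one_mul]
      push_cast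
      rw [norm_kernel₁ lam x y]
      ring
    · simp [h, ker]
  rw [Tcomp₁, nnnorm_mul, nnnorm_mul, nnnorm_I, one_mul]
  push_cast
  refine mul_le_mul_right ?_ _
  exact (enorm_integral_le_lintegral_enorm _).trans_eq (lintegral_congr hnorm)

lemma enorm_Tcomp₂_le (u F : ℝ → ℂ) (lam : ℂ) (x : ℝ) :
    (‖Tcomp₂ u lam F x‖₊ : ℝ≥0∞)
      ≤ (‖lam‖₊ : ℝ≥0∞) * ∫⁻ y, ker ((lam ^ 2).im) y x * ((‖u y‖₊ : ℝ≥0∞) * ‖F y‖₊) := by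
  have hnorm : ∀ y : ℝ,
      (‖(if y < x then Complex.I * Complex.exp (Complex.I * lam ^ 2 * ((x : ℂ) - y)) else 0)
        * (starRingEnd ℂ) (u y) * F y‖₊ : ℝ≥0∞)
      = ker ((lam ^ 2).im) y x * ((‖u y‖₊ : ℝ≥0∞) * ‖F y‖₊) := by
    intro y
    by_cases h : y < x
    · simp only [h, if_true, ker, nnnorm_mul, nnnorm_I, one_mul, RCLike.nnnorm_conj]
      push_cast
      rw [norm_kernel₂ lam x y]
      ring
    · simp [h, ker]
  rw [Tcomp₂, nnnorm_mul, nnnorm_mul, nnnorm_I, one_mul]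
  push_cast
  refine mul_le_mul_right ?_ _
  exact (enorm_integral_le_lintegral_enorm _).trans_eq (lintegral_congr hnorm)

lemma aesm_Tcomp₁ (u F : ℝ → ℂ) (lam : ℂ)
    (hu : AEStronglyMeasurable u (volume : Measure ℝ))
    (hF : AEStronglyMeasurable F (volume : Measure ℝ)) :
    AEStronglyMeasurable (Tcomp₁ u lam F) (volume : Measure ℝ) := by
  unfold Tcomp₁
  have hjoint : AEStronglyMeasurable (fun p : ℝ × ℝ =>
      (if p.1 < p.2 then Complex.I * Complex.exp (-Complex.I * lam ^ 2 * ((p.1 : ℂ) - p.2))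
        else 0) * u p.2 * F p.2) ((volume : Measure ℝ).prod volume) := by
    refine AEStronglyMeasurable.mul (AEStronglyMeasurable.mul ?_ hu.comp_snd) hF.comp_snd
    refine (Measurable.ite (measurableSet_lt measurable_fst measurable_snd) ?_
      measurable_const).aestronglyMeasurable
    refine (measurable_const.mul ?_)
    refine Complex.measurable_exp.comp ?_
    fun_prop
  exact (hjoint.integral_prod_right').const_mul _

lemma aesm_Tcomp₂ (u F : ℝ → ℂ) (lam : ℂ)
    (hu : AEStronglyMeasurable u (volume : Measure ℝ))
    (hF : AEStronglyMeasurable F (volume : Measure ℝ)) :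
    AEStronglyMeasurable (Tcomp₂ u lam F) (volume : Measure ℝ) := by
  unfold Tcomp₂
  have hjoint : AEStronglyMeasurable (fun p : ℝ × ℝ =>
      (if p.2 < p.1 then Complex.I * Complex.exp (Complex.I * lam ^ 2 * ((p.1 : ℂ) - p.2))
        else 0) * (starRingEnd ℂ) (u p.2) * F p.2) ((volume : Measure ℝ).prod volume) := by
    refine AEStronglyMeasurable.mul (AEStronglyMeasurable.mul ?_
      (Complex.continuous_conj.comp_aestronglyMeasurable hu.comp_snd)) hF.comp_snd
    refine (Measurable.ite (measurableSet_lt measurable_snd measurable_fst) ?_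
      measurable_const).aestronglyMeasurable
    refine (measurable_const.mul ?_)
    refine Complex.measurable_exp.comp ?_
    fun_prop
  exact (hjoint.integral_prod_right').const_mul _

lemma sq_lintegral_lt_top {f : ℝ → ℂ} (hf : MemLp f 2 (volume : Measure ℝ)) :
    ∫⁻ x, ((‖f x‖₊ : ℝ≥0∞)) ^ 2 < ∞ := by
  have h2 := hf.2
  rw [eLpNorm_eq_lintegral_rpow_enorm_toReal (by norm_num) (by norm_num)] at h2
  simp only [enorm_eq_nnnorm] at h2
  have h3 : ∫⁻ x, ((‖f x‖₊ : ℝ≥0∞)) ^ ((2 : ℝ≥0∞).toReal) < ∞ := by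
    by_contra h
    push_neg at h
    rw [top_le_iff.mp h] at h2
    simp [ENNReal.top_rpow_of_pos] at h2
  have h4 : ∀ x : ℝ, ((‖f x‖₊ : ℝ≥0∞)) ^ ((2 : ℝ≥0∞).toReal) = ((‖f x‖₊ : ℝ≥0∞)) ^ 2 := by
    intro x
    rw [ENNReal.toReal_ofNat, show ((2:ℝ)) = ((2:ℕ):ℝ) by norm_num, ENNReal.rpow_natCast]
  rwa [lintegral_congr h4] at h3

end TTaux

open TTaux Set Function
open scoped ENNReal NNReal

/-- There is a universal constant `C` such that for all `f, g ∈ L²(ℝ,ℂ)` and `Im λ² > 0`,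
the operator norm of `T_f(λ)T_g(λ)` on `L²(ℝ,ℂ²)` satisfies
`‖T_f(λ)T_g(λ)‖² ≤ C (|λ|⁴/(Im λ²)²) ∫∫ e^{−2Im(λ²)|x−y|}|f(x)|²|g(y)|² dxdy`
— formalized through the action on arbitrary `h = (h₁, h₂) ∈ L²(ℝ,ℂ²)`. -/
theorem operator_norm_TT_bound :
    ∃ C : ℝ, 0 < C ∧
      ∀ f g : ℝ → ℂ, MemLp f 2 (volume : Measure ℝ) → MemLp g 2 (volume : Measure ℝ) →
      ∀ lam : ℂ, 0 < (lam ^ 2).im →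
      ∀ h₁ h₂ : ℝ → ℂ, MemLp h₁ 2 (volume : Measure ℝ) → MemLp h₂ 2 (volume : Measure ℝ) →
        (∫ x : ℝ, (‖Tcomp₁ f lam (Tcomp₂ g lam h₁) x‖ ^ 2 +
            ‖Tcomp₂ f lam (Tcomp₁ g lam h₂) x‖ ^ 2)) ≤
          C * (‖lam‖ ^ 4 / ((lam ^ 2).im) ^ 2) *
            (∫ x : ℝ, ∫ y : ℝ,
              Real.exp (-2 * (lam ^ 2).im * |x - y|) * ‖f x‖ ^ 2 * ‖g y‖ ^ 2) *
            ∫ x : ℝ, (‖h₁ x‖ ^ 2 + ‖h₂ x‖ ^ 2) := by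
  refine ⟨1, one_pos, ?_⟩
  intro f g hf hg lam hlam h₁ h₂ hh₁ hh₂
  set a : ℝ := (lam ^ 2).im with ha_def
  have ha : 0 < a := hlam
  set L : ℝ≥0∞ := (‖lam‖₊ : ℝ≥0∞) with hL_def
  set A : ℝ≥0∞ := ENNReal.ofReal a⁻¹ with hA_def
  have hL_ne : L ≠ ∞ := ENNReal.coe_ne_top
  have hA_ne : A ≠ ∞ := ENNReal.ofReal_ne_top
  have hfm := hf.aestronglyMeasurable
  have hgm := hg.aestronglyMeasurable
  have hh₁m := hh₁.aestronglyMeasurable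
  have hh₂m := hh₂.aestronglyMeasurable
  set φ₁ : ℝ → ℂ := Tcomp₂ g lam h₁ with hφ₁_def
  set φ₂ : ℝ → ℂ := Tcomp₁ g lam h₂ with hφ₂_def
  have hφ₁m : AEStronglyMeasurable φ₁ volume := aesm_Tcomp₂ g h₁ lam hgm hh₁m
  have hφ₂m : AEStronglyMeasurable φ₂ volume := aesm_Tcomp₁ g h₂ lam hgm hh₂m
  set T₁ : ℝ → ℂ := Tcomp₁ f lam φ₁ with hT₁_def
  set T₂ : ℝ → ℂ := Tcomp₂ f lam φ₂ with hT₂_def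
  have hT₁m : AEStronglyMeasurable T₁ volume := aesm_Tcomp₁ f φ₁ lam hfm hφ₁m
  have hT₂m : AEStronglyMeasurable T₂ volume := aesm_Tcomp₂ f φ₂ lam hfm hφ₂m
  set H₁ : ℝ≥0∞ := ∫⁻ x, ((‖h₁ x‖₊ : ℝ≥0∞)) ^ 2 with hH₁_def
  set H₂ : ℝ≥0∞ := ∫⁻ x, ((‖h₂ x‖₊ : ℝ≥0∞)) ^ 2 with hH₂_def
  have hH₁_ne : H₁ ≠ ∞ := (sq_lintegral_lt_top hh₁).ne
  have hH₂_ne : H₂ ≠ ∞ := (sq_lintegral_lt_top hh₂).ne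
  set G2 : ℝ≥0∞ := ∫⁻ x, ((‖g x‖₊ : ℝ≥0∞)) ^ 2 with hG2_def
  have hG2_ne : G2 ≠ ∞ := (sq_lintegral_lt_top hg).ne
  set D : ℝ≥0∞ := ∫⁻ x, ((‖f x‖₊ : ℝ≥0∞)) ^ 2 *
      ∫⁻ y, ENNReal.ofReal (Real.exp (-(2 * a * |x - y|))) * ((‖g y‖₊ : ℝ≥0∞)) ^ 2 with hD_def
  -- pointwise bound on the squared norm of the inner operators
  have hφ₁bound : ∀ y, ((‖φ₁ y‖₊ : ℝ≥0∞)) ^ 2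
      ≤ L ^ 2 * ((∫⁻ z, ker (2 * a) z y * ((‖g z‖₊ : ℝ≥0∞)) ^ 2) * H₁) := by
    intro y
    have h1 := enorm_Tcomp₂_le g h₁ lam y
    have h2 := pow_le_pow_left' h1 2
    refine h2.trans ?_
    rw [mul_pow]
    refine mul_le_mul_right ?_ _
    have h3 : ∀ z : ℝ, ker a z y * ((‖g z‖₊ : ℝ≥0∞) * ‖h₁ z‖₊)
        = (ker a z y * (‖g z‖₊ : ℝ≥0∞)) * (‖h₁ z‖₊ : ℝ≥0∞) := fun z => by ring
    rw [lintegral_congr h3]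
    have hcs := lintegral_CS (fun z => ker a z y * (‖g z‖₊ : ℝ≥0∞))
      (fun z => ((‖h₁ z‖₊ : ℝ≥0∞)))
      ((ker_meas_left a y).aemeasurable.mul hgm.enorm) hh₁m.enorm
    refine hcs.trans_eq ?_
    congr 1
    refine lintegral_congr fun z => ?_
    rw [mul_pow, ker_sq]
  have hφ₂bound : ∀ y, ((‖φ₂ y‖₊ : ℝ≥0∞)) ^ 2
      ≤ L ^ 2 * ((∫⁻ z, ker (2 * a) y z * ((‖g z‖₊ : ℝ≥0∞)) ^ 2) * H₂) := by
    intro y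
    have h1 := enorm_Tcomp₁_le g h₂ lam y
    have h2 := pow_le_pow_left' h1 2
    refine h2.trans ?_
    rw [mul_pow]
    refine mul_le_mul_right ?_ _
    have h3 : ∀ z : ℝ, ker a y z * ((‖g z‖₊ : ℝ≥0∞) * ‖h₂ z‖₊)
        = (ker a y z * (‖g z‖₊ : ℝ≥0∞)) * (‖h₂ z‖₊ : ℝ≥0∞) := fun z => by ring
    rw [lintegral_congr h3]
    have hcs := lintegral_CS (fun z => ker a y z * (‖g z‖₊ : ℝ≥0∞))
      (fun z => ((‖h₂ z‖₊ : ℝ≥0∞)))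
      ((ker_meas_right a y).aemeasurable.mul hgm.enorm) hh₂m.enorm
    refine hcs.trans_eq ?_
    congr 1
    refine lintegral_congr fun z => ?_
    rw [mul_pow, ker_sq]
  -- the two Schur-type bounds
  have bound1 : ∫⁻ x, ((‖T₁ x‖₊ : ℝ≥0∞)) ^ 2 ≤ L ^ 4 * A ^ 2 * D * H₁ := by
    have hψm : AEMeasurable (fun y => (‖f y‖₊ : ℝ≥0∞) * (‖φ₁ y‖₊ : ℝ≥0∞)) volume :=
      hfm.enorm.mul hφ₁m.enorm
    calc ∫⁻ x, ((‖T₁ x‖₊ : ℝ≥0∞)) ^ 2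
        ≤ ∫⁻ x, (L * ∫⁻ y, ker a x y * ((‖f y‖₊ : ℝ≥0∞) * ‖φ₁ y‖₊)) ^ 2 :=
          lintegral_mono fun x => pow_le_pow_left' (enorm_Tcomp₁_le f φ₁ lam x) 2
      _ = L ^ 2 * ∫⁻ x, (∫⁻ y, ker a x y * ((‖f y‖₊ : ℝ≥0∞) * ‖φ₁ y‖₊)) ^ 2 := by
          rw [← lintegral_const_mul' _ _ (ENNReal.pow_ne_top hL_ne)]
          exact lintegral_congr fun x => by rw [mul_pow]
      _ ≤ L ^ 2 * (A ^ 2 * ∫⁻ y, ((‖f y‖₊ : ℝ≥0∞) * (‖φ₁ y‖₊ : ℝ≥0∞)) ^ 2) := by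
          refine mul_le_mul_right ?_ _
          exact schur (ker_meas a) hA_ne (fun x => (ker_row ha x).le)
            (fun y => (ker_col ha y).le) hψm
      _ ≤ L ^ 2 * (A ^ 2 * ∫⁻ y, (L ^ 2 * H₁) *
            ((‖f y‖₊ : ℝ≥0∞) ^ 2 * ∫⁻ z, ker (2 * a) z y * ((‖g z‖₊ : ℝ≥0∞)) ^ 2)) := by
          refine mul_le_mul_right (mul_le_mul_right (lintegral_mono fun y => ?_) _) _
          rw [mul_pow]
          calc (‖f y‖₊ : ℝ≥0∞) ^ 2 * (‖φ₁ y‖₊ : ℝ≥0∞) ^ 2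
              ≤ (‖f y‖₊ : ℝ≥0∞) ^ 2 *
                (L ^ 2 * ((∫⁻ z, ker (2 * a) z y * ((‖g z‖₊ : ℝ≥0∞)) ^ 2) * H₁)) :=
                mul_le_mul_right (hφ₁bound y) _
            _ = (L ^ 2 * H₁) *
                ((‖f y‖₊ : ℝ≥0∞) ^ 2 * ∫⁻ z, ker (2 * a) z y * ((‖g z‖₊ : ℝ≥0∞)) ^ 2) := by
                ring
      _ = L ^ 4 * A ^ 2 * H₁ *
            ∫⁻ y, (‖f y‖₊ : ℝ≥0∞) ^ 2 * ∫⁻ z, ker (2 * a) z y * ((‖g z‖₊ : ℝ≥0∞)) ^ 2 := by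
          rw [lintegral_const_mul' _ _ (ENNReal.mul_ne_top (ENNReal.pow_ne_top hL_ne) hH₁_ne)]
          ring
      _ ≤ L ^ 4 * A ^ 2 * H₁ * D := by
          refine mul_le_mul_right (lintegral_mono fun y => mul_le_mul_right ?_ _) _
          refine lintegral_mono fun z => mul_le_mul_left ?_ _
          refine (ker_le (2 * a) z y).trans_eq ?_
          rw [abs_sub_comm]
      _ = L ^ 4 * A ^ 2 * D * H₁ := by ring
  have bound2 : ∫⁻ x, ((‖T₂ x‖₊ : ℝ≥0∞)) ^ 2 ≤ L ^ 4 * A ^ 2 * D * H₂ := by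
    have hψm : AEMeasurable (fun y => (‖f y‖₊ : ℝ≥0∞) * (‖φ₂ y‖₊ : ℝ≥0∞)) volume :=
      hfm.enorm.mul hφ₂m.enorm
    have hkmeas : Measurable (fun p : ℝ × ℝ => ker a p.2 p.1) :=
      (ker_meas a).comp measurable_swap
    calc ∫⁻ x, ((‖T₂ x‖₊ : ℝ≥0∞)) ^ 2
        ≤ ∫⁻ x, (L * ∫⁻ y, ker a y x * ((‖f y‖₊ : ℝ≥0∞) * ‖φ₂ y‖₊)) ^ 2 :=
          lintegral_mono fun x => pow_le_pow_left' (enorm_Tcomp₂_le f φ₂ lam x) 2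
      _ = L ^ 2 * ∫⁻ x, (∫⁻ y, ker a y x * ((‖f y‖₊ : ℝ≥0∞) * ‖φ₂ y‖₊)) ^ 2 := by
          rw [← lintegral_const_mul' _ _ (ENNReal.pow_ne_top hL_ne)]
          exact lintegral_congr fun x => by rw [mul_pow]
      _ ≤ L ^ 2 * (A ^ 2 * ∫⁻ y, ((‖f y‖₊ : ℝ≥0∞) * (‖φ₂ y‖₊ : ℝ≥0∞)) ^ 2) := by
          refine mul_le_mul_right ?_ _
          exact schur (k := fun x y => ker a y x) hkmeas hA_ne (fun x => (ker_col ha x).le)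
            (fun y => (ker_row ha y).le) hψm
      _ ≤ L ^ 2 * (A ^ 2 * ∫⁻ y, (L ^ 2 * H₂) *
            ((‖f y‖₊ : ℝ≥0∞) ^ 2 * ∫⁻ z, ker (2 * a) y z * ((‖g z‖₊ : ℝ≥0∞)) ^ 2)) := by
          refine mul_le_mul_right (mul_le_mul_right (lintegral_mono fun y => ?_) _) _
          rw [mul_pow]
          calc (‖f y‖₊ : ℝ≥0∞) ^ 2 * (‖φ₂ y‖₊ : ℝ≥0∞) ^ 2
              ≤ (‖f y‖₊ : ℝ≥0∞) ^ 2 *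
                (L ^ 2 * ((∫⁻ z, ker (2 * a) y z * ((‖g z‖₊ : ℝ≥0∞)) ^ 2) * H₂)) :=
                mul_le_mul_right (hφ₂bound y) _
            _ = (L ^ 2 * H₂) *
                ((‖f y‖₊ : ℝ≥0∞) ^ 2 * ∫⁻ z, ker (2 * a) y z * ((‖g z‖₊ : ℝ≥0∞)) ^ 2) := by
                ring
      _ = L ^ 4 * A ^ 2 * H₂ *
            ∫⁻ y, (‖f y‖₊ : ℝ≥0∞) ^ 2 * ∫⁻ z, ker (2 * a) y z * ((‖g z‖₊ : ℝ≥0∞)) ^ 2 := by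
          rw [lintegral_const_mul' _ _ (ENNReal.mul_ne_top (ENNReal.pow_ne_top hL_ne) hH₂_ne)]
          ring
      _ ≤ L ^ 4 * A ^ 2 * H₂ * D := by
          refine mul_le_mul_right (lintegral_mono fun y => mul_le_mul_right ?_ _) _
          refine lintegral_mono fun z => mul_le_mul_left ?_ _
          exact ker_le (2 * a) y z
      _ = L ^ 4 * A ^ 2 * D * H₂ := by ring
  -- finiteness of D
  have hΨ_le : ∀ x : ℝ,
      (∫⁻ y, ENNReal.ofReal (Real.exp (-(2 * a * |x - y|))) * ((‖g y‖₊ : ℝ≥0∞)) ^ 2) ≤ G2 := by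
    intro x
    refine lintegral_mono fun y => ?_
    have h1 : ENNReal.ofReal (Real.exp (-(2 * a * |x - y|))) ≤ 1 := by
      rw [show (1 : ℝ≥0∞) = ENNReal.ofReal 1 by simp]
      refine ENNReal.ofReal_le_ofReal ?_
      rw [Real.exp_le_one_iff]
      have : 0 ≤ 2 * a * |x - y| := by positivity
      linarith
    calc ENNReal.ofReal (Real.exp (-(2 * a * |x - y|))) * ((‖g y‖₊ : ℝ≥0∞)) ^ 2
        ≤ 1 * ((‖g y‖₊ : ℝ≥0∞)) ^ 2 := mul_le_mul_left h1 _
      _ = ((‖g y‖₊ : ℝ≥0∞)) ^ 2 := one_mul _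
  have hD_ne : D ≠ ∞ := by
    have h1 : D ≤ (∫⁻ x, ((‖f x‖₊ : ℝ≥0∞)) ^ 2) * G2 := by
      rw [hD_def, ← lintegral_mul_const' G2 _ hG2_ne]
      exact lintegral_mono fun x => mul_le_mul_right (hΨ_le x) _
    exact (h1.trans_lt (ENNReal.mul_lt_top (sq_lintegral_lt_top hf) hG2_ne.lt_top)).ne
  -- conversion of the LHS
  have hLHS : (∫ x : ℝ, (‖T₁ x‖ ^ 2 + ‖T₂ x‖ ^ 2))
      = (∫⁻ x, (((‖T₁ x‖₊ : ℝ≥0∞)) ^ 2 + ((‖T₂ x‖₊ : ℝ≥0∞)) ^ 2)).toReal := by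
    rw [integral_eq_lintegral_of_nonneg_ae (f := fun x => ‖T₁ x‖ ^ 2 + ‖T₂ x‖ ^ 2) (Filter.Eventually.of_forall fun x => by positivity)
      (((hT₁m.norm.aemeasurable.pow_const 2).add
        (hT₂m.norm.aemeasurable.pow_const 2)).aestronglyMeasurable)]
    congr 1
    refine lintegral_congr fun x => ?_
    rw [ENNReal.ofReal_add (by positivity) (by positivity),
      ENNReal.ofReal_pow (norm_nonneg _), ENNReal.ofReal_pow (norm_nonneg _),
      ofReal_norm, ofReal_norm, enorm_eq_nnnorm, enorm_eq_nnnorm]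
  have hsplit : ∫⁻ x, (((‖T₁ x‖₊ : ℝ≥0∞)) ^ 2 + ((‖T₂ x‖₊ : ℝ≥0∞)) ^ 2)
      = (∫⁻ x, ((‖T₁ x‖₊ : ℝ≥0∞)) ^ 2) + ∫⁻ x, ((‖T₂ x‖₊ : ℝ≥0∞)) ^ 2 :=
    lintegral_add_left' (hT₁m.enorm.pow_const 2) _
  -- conversion of the double integral on the RHS
  have hinner : ∀ x : ℝ,
      (∫ y : ℝ, Real.exp (-2 * a * |x - y|) * ‖f x‖ ^ 2 * ‖g y‖ ^ 2)
      = (((‖f x‖₊ : ℝ≥0∞)) ^ 2 *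
          ∫⁻ y, ENNReal.ofReal (Real.exp (-(2 * a * |x - y|))) * ((‖g y‖₊ : ℝ≥0∞)) ^ 2).toReal := by
    intro x
    have hcont : Continuous (fun y : ℝ => Real.exp (-2 * a * |x - y|)) :=
      Real.continuous_exp.comp
        (continuous_const.mul ((continuous_const.sub continuous_id).abs))
    rw [integral_eq_lintegral_of_nonneg_ae
      (f := fun y => Real.exp (-2 * a * |x - y|) * ‖f x‖ ^ 2 * ‖g y‖ ^ 2)
      (Filter.Eventually.of_forall fun y => by positivity)
      (((hcont.aestronglyMeasurable.aemeasurable.mul_const _).mul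
        (hgm.norm.aemeasurable.pow_const 2)).aestronglyMeasurable)]
    rw [← lintegral_const_mul' _ _ (ENNReal.pow_ne_top ENNReal.coe_ne_top)]
    congr 1
    refine lintegral_congr fun y => ?_
    rw [ENNReal.ofReal_mul (by positivity), ENNReal.ofReal_mul (Real.exp_pos _).le,
      ENNReal.ofReal_pow (norm_nonneg _), ENNReal.ofReal_pow (norm_nonneg _),
      ofReal_norm, ofReal_norm, enorm_eq_nnnorm, enorm_eq_nnnorm,
      show (-2 * a * |x - y|) = -(2 * a * |x - y|) by ring]
    ring
  -- measurable representative of the inner lintegral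
  obtain ⟨G0, hG0m, hG0e⟩ := hgm.enorm.pow_const 2
  have hΨeq : ∀ x : ℝ,
      (∫⁻ y, ENNReal.ofReal (Real.exp (-(2 * a * |x - y|))) * ((‖g y‖₊ : ℝ≥0∞)) ^ 2)
      = ∫⁻ y, ENNReal.ofReal (Real.exp (-(2 * a * |x - y|))) * G0 y := by
    intro x
    refine lintegral_congr_ae (hG0e.mono fun y hy => ?_)
    dsimp only at hy ⊢
    exact congrArg (_ * ·) hy
  have hΨm : Measurable (fun x : ℝ =>
      ∫⁻ y, ENNReal.ofReal (Real.exp (-(2 * a * |x - y|))) * G0 y) := by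
    refine Measurable.lintegral_prod_right'
      (f := fun p : ℝ × ℝ => ENNReal.ofReal (Real.exp (-(2 * a * |p.1 - p.2|))) * G0 p.2) ?_
    refine Measurable.mul ?_ (hG0m.comp measurable_snd)
    exact (Real.continuous_exp.comp
      ((continuous_const.mul
        ((continuous_fst.sub continuous_snd).abs)).neg)).measurable.ennreal_ofReal
  have hΦm : AEMeasurable (fun x => ((‖f x‖₊ : ℝ≥0∞)) ^ 2 *
      ∫⁻ y, ENNReal.ofReal (Real.exp (-(2 * a * |x - y|))) * ((‖g y‖₊ : ℝ≥0∞)) ^ 2) volume := by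
    refine (hfm.enorm.pow_const 2).mul ?_
    refine AEMeasurable.congr hΨm.aemeasurable ?_
    exact Filter.Eventually.of_forall fun x => (hΨeq x).symm
  have hΦfin : ∀ᵐ x ∂(volume : Measure ℝ), ((‖f x‖₊ : ℝ≥0∞)) ^ 2 *
      (∫⁻ y, ENNReal.ofReal (Real.exp (-(2 * a * |x - y|))) * ((‖g y‖₊ : ℝ≥0∞)) ^ 2) < ∞ :=
    Filter.Eventually.of_forall fun x =>
      ENNReal.mul_lt_top (ENNReal.pow_lt_top ENNReal.coe_lt_top)
        ((hΨ_le x).trans_lt hG2_ne.lt_top)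
  have hDreal : (∫ x : ℝ, ∫ y : ℝ, Real.exp (-2 * a * |x - y|) * ‖f x‖ ^ 2 * ‖g y‖ ^ 2)
      = D.toReal := by
    calc (∫ x : ℝ, ∫ y : ℝ, Real.exp (-2 * a * |x - y|) * ‖f x‖ ^ 2 * ‖g y‖ ^ 2)
        = ∫ x : ℝ, (((‖f x‖₊ : ℝ≥0∞)) ^ 2 *
            ∫⁻ y, ENNReal.ofReal (Real.exp (-(2 * a * |x - y|))) *
              ((‖g y‖₊ : ℝ≥0∞)) ^ 2).toReal :=
          integral_congr_ae (Filter.Eventually.of_forall fun x => hinner x)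
      _ = D.toReal := integral_toReal hΦm hΦfin
  -- conversion of the h-integral
  have hH : (∫ x : ℝ, (‖h₁ x‖ ^ 2 + ‖h₂ x‖ ^ 2)) = (H₁ + H₂).toReal := by
    rw [integral_eq_lintegral_of_nonneg_ae (f := fun x => ‖h₁ x‖ ^ 2 + ‖h₂ x‖ ^ 2) (Filter.Eventually.of_forall fun x => by positivity)
      (((hh₁m.norm.aemeasurable.pow_const 2).add
        (hh₂m.norm.aemeasurable.pow_const 2)).aestronglyMeasurable)]
    rw [hH₁_def, hH₂_def, ← lintegral_add_left'
      (f := fun x => ((‖h₁ x‖₊ : ℝ≥0∞)) ^ 2) (hh₁m.enorm.pow_const 2)]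
    congr 1
    refine lintegral_congr fun x => ?_
    rw [ENNReal.ofReal_add (by positivity) (by positivity),
      ENNReal.ofReal_pow (norm_nonneg _), ENNReal.ofReal_pow (norm_nonneg _),
      ofReal_norm, ofReal_norm, enorm_eq_nnnorm, enorm_eq_nnnorm]
  have hcoef : ‖lam‖ ^ 4 / a ^ 2 = (L ^ 4 * A ^ 2).toReal := by
    rw [ENNReal.toReal_mul, ENNReal.toReal_pow, ENNReal.toReal_pow, ENNReal.coe_toReal,
      ENNReal.toReal_ofReal (inv_nonneg.mpr ha.le), coe_nnnorm, inv_pow, div_eq_mul_inv]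
  rw [hLHS, hDreal, hH, one_mul, hcoef, ← ENNReal.toReal_mul, ← ENNReal.toReal_mul]
  refine ENNReal.toReal_mono ?_ ?_
  · exact ENNReal.mul_ne_top (ENNReal.mul_ne_top
      (ENNReal.mul_ne_top (ENNReal.pow_ne_top hL_ne) (ENNReal.pow_ne_top hA_ne)) hD_ne)
      (ENNReal.add_ne_top.mpr ⟨hH₁_ne, hH₂_ne⟩)
  · rw [hsplit]
    calc (∫⁻ x, ((‖T₁ x‖₊ : ℝ≥0∞)) ^ 2) + ∫⁻ x, ((‖T₂ x‖₊ : ℝ≥0∞)) ^ 2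
        ≤ L ^ 4 * A ^ 2 * D * H₁ + L ^ 4 * A ^ 2 * D * H₂ := add_le_add bound1 bound2
      _ = L ^ 4 * A ^ 2 * D * (H₁ + H₂) := by ring
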